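/- For t ∈ (0, 1/4), let x₊(t) and x₋(t) be the two real roots of the quadratic equation x² + (2 − t⁻¹)x + 1 = 0, with x₊(t) > x₋(t) > 0 (explicitly x_±(t) = ((t⁻¹ − 2) ± √(t⁻¹(t⁻¹ − 4)))/2). Then the series ∑_{k≥1} binom(2k,k)·t^k/k converges and log x₊(t) − log x₋(t) = −2·log t − 2·∑_{k≥1} binom(2k,k)·t^k/k. -/

import Mathlib

noncomputable def aa (k : ℕ) : ℝ := (Nat.choose (2 * k) k : ℝ)

lemma aa_nonneg (k : ℕ) : 0 ≤ aa k := Nat.cast_nonneg _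

lemma aa_le (k : ℕ) : aa k ≤ 4 ^ k := by
  have h1 : Nat.choose (2 * k) k ≤ Nat.choose (2 * k + 1) k :=
    Nat.choose_mono k (Nat.le_succ _)
  have h : Nat.choose (2 * k) k ≤ 4 ^ k := h1.trans (Nat.choose_middle_le_pow k)
  unfold aa; exact_mod_cast Nat.cast_le.mpr h

lemma aa_zero : aa 0 = 1 := by simp [aa]

lemma aa_one : aa 1 = 2 := by norm_num [aa]

lemma aa_rec (k : ℕ) : ((k : ℝ) + 1) * aa (k + 1) = (4 * k + 2) * aa k := by
  have h := Nat.succ_mul_centralBinom_succ k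
  rw [Nat.centralBinom_eq_two_mul_choose, Nat.centralBinom_eq_two_mul_choose] at h
  have h' : (((k + 1) * Nat.choose (2 * (k + 1)) (k + 1) : ℕ) : ℝ)
      = ((2 * (2 * k + 1) * Nat.choose (2 * k) k : ℕ) : ℝ) := by exact_mod_cast congrArg Nat.cast h
  push_cast at h'
  unfold aa; push_cast; linarith
lemma summable_aux {r : ℝ} (h0 : 0 ≤ r) (h1 : r < 1) :
    Summable (fun k : ℕ => (k : ℝ) * r ^ (k - 1)) := by
  rw [← summable_nat_add_iff 1]
  have hr : ‖r‖ < 1 := by rwa [Real.norm_eq_abs, abs_of_nonneg h0]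
  have hs : Summable (fun n : ℕ => (n : ℝ) * r ^ n + r ^ n) :=
    ((summable_pow_mul_geometric_of_norm_lt_one 1 hr).congr (fun n => by ring)).add
      (summable_geometric_of_lt_one h0 h1)
  exact hs.congr (fun n => by push_cast [Nat.add_sub_cancel]; ring)

lemma sum_f {x : ℝ} (hx : |x| < 1 / 4) : Summable (fun k : ℕ => aa k * x ^ k) := by
  refine Summable.of_norm_bounded (g := fun k => (4 * |x|) ^ k)
    (summable_geometric_of_lt_one (by positivity) (by linarith)) (fun k => ?_)
  rw [norm_mul, norm_pow, Real.norm_eq_abs, Real.norm_eq_abs, abs_of_nonneg (aa_nonneg k)]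
  show aa k * |x| ^ k ≤ (4 * |x|) ^ k
  rw [mul_pow]
  exact mul_le_mul_of_nonneg_right (aa_le k) (by positivity)

lemma sum_L {x b : ℝ} (hb : b < 1 / 4) (hxb : |x| ≤ b) :
    Summable (fun k : ℕ => aa k * ((k : ℝ) * x ^ (k - 1))) := by
  have hb0 : 0 ≤ b := le_trans (abs_nonneg x) hxb
  refine Summable.of_norm_bounded (g := fun k => 4 * ((k : ℝ) * (4 * b) ^ (k - 1)))
    (((summable_aux (by positivity) (by linarith)).mul_left 4)) (fun k => ?_)
  match k with
  | 0 => simp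
  | (m + 1) =>
    rw [norm_mul, norm_mul, Real.norm_eq_abs, abs_of_nonneg (aa_nonneg _),
      Real.norm_eq_abs, Real.norm_eq_abs, Nat.add_sub_cancel, abs_pow,
      Nat.abs_cast]
    push_cast
    calc aa (m + 1) * (((m : ℝ) + 1) * |x| ^ m) ≤ 4 ^ (m + 1) * (((m : ℝ) + 1) * b ^ m) := by
          apply mul_le_mul (aa_le _) ?_ (by positivity) (by positivity)
          exact mul_le_mul_of_nonneg_left (pow_le_pow_left₀ (abs_nonneg x) hxb m) (by positivity)
      _ = 4 * (((m : ℝ) + 1) * (4 * b) ^ m) := by rw [mul_pow]; ring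

lemma sum_K {x : ℝ} (hx : |x| < 1 / 4) :
    Summable (fun k : ℕ => (k : ℝ) * (aa k * x ^ k)) := by
  have hr : ‖4 * |x|‖ < 1 := by
    rw [Real.norm_eq_abs, abs_of_nonneg (by positivity)]; linarith
  refine Summable.of_norm_bounded (g := fun k => (k : ℝ) * (4 * |x|) ^ k)
    ((summable_pow_mul_geometric_of_norm_lt_one 1 hr).congr (fun n => by push_cast; ring))
    (fun k => ?_)
  rw [norm_mul, norm_mul, Real.norm_eq_abs, Real.norm_eq_abs, Real.norm_eq_abs,
    abs_of_nonneg (aa_nonneg _), abs_of_nonneg (Nat.cast_nonneg k), abs_pow]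
  show (k : ℝ) * (aa k * |x| ^ k) ≤ (k : ℝ) * (4 * |x|) ^ k
  rw [mul_pow]
  exact mul_le_mul_of_nonneg_left
    (mul_le_mul_of_nonneg_right (aa_le k) (by positivity)) (Nat.cast_nonneg k)
lemma hasderiv_f {b y : ℝ} (hb0 : 0 < b) (hb : b < 1 / 4) (hy : y ∈ Set.Ioo (-b) b) :
    HasDerivAt (fun c : ℝ => ∑' k : ℕ, aa k * c ^ k)
      (∑' k : ℕ, aa k * ((k : ℝ) * y ^ (k - 1))) y := by
  refine hasDerivAt_tsum_of_isPreconnected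
    (u := fun k : ℕ => 4 * ((k : ℝ) * (4 * b) ^ (k - 1)))
    ((summable_aux (by positivity) (by linarith)).mul_left 4)
    isOpen_Ioo (convex_Ioo _ _).isPreconnected
    (fun k z hz => ((hasDerivAt_pow k z).const_mul (aa k)))
    (fun k z hz => ?_) (show (0:ℝ) ∈ Set.Ioo (-b) b by constructor <;> [linarith; linarith])
    ?_ hy
  · -- bound
    have hzb : |z| ≤ b := by
      rw [abs_le]; exact ⟨hz.1.le, hz.2.le⟩
    match k with
    | 0 => simp
    | (m + 1) =>
      rw [norm_mul, norm_mul, Real.norm_eq_abs, abs_of_nonneg (aa_nonneg _),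
        Real.norm_eq_abs, Real.norm_eq_abs, Nat.add_sub_cancel, abs_pow, Nat.abs_cast]
      push_cast
      calc aa (m + 1) * (((m : ℝ) + 1) * |z| ^ m)
          ≤ 4 ^ (m + 1) * (((m : ℝ) + 1) * b ^ m) := by
            apply mul_le_mul (aa_le _) ?_ (by positivity) (by positivity)
            exact mul_le_mul_of_nonneg_left (pow_le_pow_left₀ (abs_nonneg z) hzb m)
              (by positivity)
        _ = 4 * (((m : ℝ) + 1) * (4 * b) ^ m) := by rw [mul_pow]; ring
  · -- summable at 0
    refine summable_of_ne_finset_zero (s := {0}) (fun k hk => ?_)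
    simp only [Finset.mem_singleton] at hk
    simp [zero_pow hk]

lemma key {x b : ℝ} (hb : b < 1 / 4) (hxb : |x| ≤ b) :
    (1 - 4 * x) * ∑' k : ℕ, aa k * ((k : ℝ) * x ^ (k - 1))
      = 2 * ∑' k : ℕ, aa k * x ^ k := by
  have hx : |x| < 1 / 4 := lt_of_le_of_lt hxb hb
  have SL := sum_L hb hxb
  have Sf := sum_f hx
  have SK := sum_K hx
  set L := ∑' k : ℕ, aa k * ((k : ℝ) * x ^ (k - 1)) with hL
  set F := ∑' k : ℕ, aa k * x ^ k with hF
  -- step 1 : L = ∑' (k+1) * aa (k+1) * x ^ k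
  have h1 : L = ∑' k : ℕ, ((k : ℝ) + 1) * aa (k + 1) * x ^ k := by
    rw [hL, Summable.tsum_eq_zero_add SL]
    simp only [Nat.cast_zero, zero_mul, mul_zero, zero_add]
    exact tsum_congr (fun k => by push_cast [Nat.add_sub_cancel]; ring)
  -- step 2 : termwise recurrence and splitting
  have h2 : ∑' k : ℕ, ((k : ℝ) + 1) * aa (k + 1) * x ^ k
      = 4 * ∑' k : ℕ, (k : ℝ) * (aa k * x ^ k) + 2 * F := by
    rw [hF, ← tsum_mul_left, ← tsum_mul_left, ← Summable.tsum_add (SK.mul_left 4) (Sf.mul_left 2)]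
    exact tsum_congr (fun k => by
      have := aa_rec k
      linear_combination x ^ k * this)
  -- step 3 : ∑' k * (aa k * x ^ k) = x * L
  have h3 : ∑' k : ℕ, (k : ℝ) * (aa k * x ^ k) = x * L := by
    rw [hL, ← tsum_mul_left]
    refine tsum_congr (fun k => ?_)
    match k with
    | 0 => simp
    | (m + 1) =>
      rw [Nat.add_sub_cancel]
      push_cast
      ring
  rw [h1, h2, h3] at *
  linarith [h1]
lemma sqrt_deriv {y : ℝ} (hy : 1 - 4 * y > 0) :
    HasDerivAt (fun z : ℝ => Real.sqrt (1 - 4 * z))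
      (1 / (2 * Real.sqrt (1 - 4 * y)) * (-4)) y := by
  have hinner : HasDerivAt (fun z : ℝ => 1 - 4 * z) (-4) y := by
    simpa using ((hasDerivAt_id y).const_mul (4:ℝ)).const_sub (1:ℝ)
  exact (Real.hasDerivAt_sqrt (ne_of_gt hy)).comp y hinner

lemma P1 {c : ℝ} (hc0 : 0 ≤ c) (hc : c < 1 / 4) :
    (∑' k : ℕ, aa k * c ^ k) * Real.sqrt (1 - 4 * c) = 1 := by
  set b : ℝ := (c + 1 / 4) / 2 with hbdef
  have hb0 : 0 < b := by rw [hbdef]; linarith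
  have hb : b < 1 / 4 := by rw [hbdef]; linarith
  have hcb : c < b := by rw [hbdef]; linarith
  set F : ℝ → ℝ := fun z => (∑' k : ℕ, aa k * z ^ k) * Real.sqrt (1 - 4 * z) with hFdef
  have hF : ∀ y ∈ Set.Icc (0:ℝ) c, HasDerivAt F 0 y := by
    intro y hy
    have hy' : y ∈ Set.Ioo (-b) b := ⟨by linarith [hy.1], by linarith [hy.2]⟩
    have hypos : 1 - 4 * y > 0 := by
      have : y < 1 / 4 := lt_trans hy'.2 hb
      linarith
    have hs : Real.sqrt (1 - 4 * y) > 0 := Real.sqrt_pos.mpr hypos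
    have hmul := (hasderiv_f hb0 hb hy').mul (sqrt_deriv hypos)
    convert hmul using 1
    · rfl
    · rfl
    · rfl
    have hs2 : Real.sqrt (1 - 4 * y) ^ 2 = 1 - 4 * y := Real.sq_sqrt hypos.le
    have hk := key hb (show |y| ≤ b by rw [abs_le]; exact ⟨hy'.1.le, hy'.2.le⟩)
    rw [← hs2] at hk
    have hD : (∑' k : ℕ, aa k * ((k : ℝ) * y ^ (k - 1)))
        = 2 * (∑' k : ℕ, aa k * y ^ k) / Real.sqrt (1 - 4 * y) ^ 2 := by
      rw [eq_div_iff (by positivity)]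
      linarith [hk]
    rw [hD]
    field_simp
    linear_combination (0 : ℝ) * hs2
  have hcont : ContinuousOn F (Set.Icc 0 c) :=
    fun y hy => ((hF y hy).continuousAt).continuousWithinAt
  have := constant_of_has_deriv_right_zero hcont
    (fun y hy => ((hF y (Set.mem_Icc.mpr ⟨hy.1, hy.2.le⟩)).hasDerivWithinAt)) c
    (Set.mem_Icc.mpr ⟨hc0, le_refl c⟩)
  have h2 : (∑' k : ℕ, aa k * c ^ k) * Real.sqrt (1 - 4 * c)
      = (∑' k : ℕ, aa k * (0:ℝ) ^ k) * Real.sqrt (1 - 4 * 0) := this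
  rw [h2, tsum_eq_single 0 (fun k hk => by simp [zero_pow hk])]
  simp [aa_zero]
lemma sum_D {y b : ℝ} (hb : b < 1 / 4) (hyb : |y| ≤ b) :
    Summable (fun k : ℕ => aa (k + 1) * y ^ k) := by
  have hb0 : 0 ≤ b := le_trans (abs_nonneg y) hyb
  refine Summable.of_norm_bounded (g := fun k => 4 * (4 * b) ^ k)
    ((summable_geometric_of_lt_one (by positivity) (by linarith)).mul_left 4) (fun k => ?_)
  rw [norm_mul, Real.norm_eq_abs, Real.norm_eq_abs, abs_of_nonneg (aa_nonneg _), abs_pow]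
  calc aa (k + 1) * |y| ^ k ≤ 4 ^ (k + 1) * b ^ k := by
        apply mul_le_mul (aa_le _) (pow_le_pow_left₀ (abs_nonneg y) hyb k)
          (by positivity) (by positivity)
    _ = 4 * (4 * b) ^ k := by rw [mul_pow]; ring

lemma hasderiv_S {b y : ℝ} (hb0 : 0 < b) (hb : b < 1 / 4) (hy : y ∈ Set.Ioo (-b) b) :
    HasDerivAt (fun c : ℝ => ∑' k : ℕ, aa (k + 1) * c ^ (k + 1) / ((k : ℝ) + 1))
      (∑' k : ℕ, aa (k + 1) * y ^ k) y := by
  refine hasDerivAt_tsum_of_isPreconnected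
    (g := fun (k : ℕ) (c : ℝ) => aa (k + 1) * c ^ (k + 1) / ((k : ℝ) + 1))
    (g' := fun (k : ℕ) (y : ℝ) => aa (k + 1) * y ^ k)
    (u := fun k : ℕ => 4 * (4 * b) ^ k)
    ((summable_geometric_of_lt_one (by positivity) (by linarith)).mul_left 4)
    isOpen_Ioo (convex_Ioo _ _).isPreconnected
    (fun k z hz => ?_) (fun k z hz => ?_)
    (show (0:ℝ) ∈ Set.Ioo (-b) b by constructor <;> [linarith; linarith])
    ?_ hy
  · have h := (hasDerivAt_pow (k + 1) z).const_mul (aa (k + 1) / ((k : ℝ) + 1))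
    have hne : ((k : ℝ) + 1) ≠ 0 := by positivity
    convert h using 1
    · rfl
    · funext w; ring
    · rw [Nat.add_sub_cancel]; push_cast; field_simp
  · have hzb : |z| ≤ b := by rw [abs_le]; exact ⟨hz.1.le, hz.2.le⟩
    rw [norm_mul, Real.norm_eq_abs, Real.norm_eq_abs, abs_of_nonneg (aa_nonneg _), abs_pow]
    calc aa (k + 1) * |z| ^ k ≤ 4 ^ (k + 1) * b ^ k := by
          apply mul_le_mul (aa_le _) (pow_le_pow_left₀ (abs_nonneg z) hzb k)
            (by positivity) (by positivity)
      _ = 4 * (4 * b) ^ k := by rw [mul_pow]; ring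
  · refine summable_of_ne_finset_zero (s := (∅ : Finset ℕ)) (fun k _ => ?_)
    simp [zero_pow (Nat.succ_ne_zero k)]

lemma D_val_pos {y : ℝ} (hy0 : 0 < y) (hy : y < 1 / 4) :
    ∑' k : ℕ, aa (k + 1) * y ^ k = (1 / Real.sqrt (1 - 4 * y) - 1) / y := by
  have hyabs : |y| < 1 / 4 := by rw [abs_of_pos hy0]; exact hy
  have hs : Real.sqrt (1 - 4 * y) > 0 := Real.sqrt_pos.mpr (by linarith)
  have hf : (∑' k : ℕ, aa k * y ^ k) = 1 / Real.sqrt (1 - 4 * y) := by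
    rw [eq_div_iff (ne_of_gt hs)]; exact P1 hy0.le hy
  have h1 : y * ∑' k : ℕ, aa (k + 1) * y ^ k = ∑' k : ℕ, aa (k + 1) * y ^ (k + 1) := by
    rw [← tsum_mul_left]
    exact tsum_congr (fun k => by rw [pow_succ]; ring)
  have h2 : (∑' k : ℕ, aa k * y ^ k) = 1 + ∑' k : ℕ, aa (k + 1) * y ^ (k + 1) := by
    rw [Summable.tsum_eq_zero_add (sum_f hyabs)]
    simp [aa_zero]
  rw [eq_div_iff (ne_of_gt hy0), mul_comm, h1]
  rw [hf] at h2
  linarith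
lemma D_val_zero : ∑' k : ℕ, aa (k + 1) * (0:ℝ) ^ k = 2 := by
  rw [tsum_eq_single 0 (fun k hk => by simp [zero_pow hk])]
  simp [aa_one]

lemma log_deriv {y : ℝ} (hy : 1 - 4 * y > 0) :
    HasDerivAt (fun z : ℝ => Real.log ((1 + Real.sqrt (1 - 4 * z)) / 2))
      (((1 / (2 * Real.sqrt (1 - 4 * y)) * (-4)) / 2) / ((1 + Real.sqrt (1 - 4 * y)) / 2)) y := by
  have hs : 0 ≤ Real.sqrt (1 - 4 * y) := Real.sqrt_nonneg _
  have harg : (1 + Real.sqrt (1 - 4 * y)) / 2 ≠ 0 := by positivity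
  exact (((sqrt_deriv hy).const_add 1).div_const 2).log harg

lemma P2 {c : ℝ} (hc0 : 0 ≤ c) (hc : c < 1 / 4) :
    (∑' k : ℕ, aa (k + 1) * c ^ (k + 1) / ((k : ℝ) + 1))
      = -2 * Real.log ((1 + Real.sqrt (1 - 4 * c)) / 2) := by
  set b : ℝ := (c + 1 / 4) / 2 with hbdef
  have hb0 : 0 < b := by rw [hbdef]; linarith
  have hb : b < 1 / 4 := by rw [hbdef]; linarith
  have hcb : c < b := by rw [hbdef]; linarith
  set G : ℝ → ℝ := fun z => (∑' k : ℕ, aa (k + 1) * z ^ (k + 1) / ((k : ℝ) + 1))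
    + 2 * Real.log ((1 + Real.sqrt (1 - 4 * z)) / 2) with hGdef
  have hG : ∀ y ∈ Set.Icc (0:ℝ) c, HasDerivAt G 0 y := by
    intro y hy
    have hy' : y ∈ Set.Ioo (-b) b := ⟨by linarith [hy.1], by linarith [hy.2]⟩
    have hypos : 1 - 4 * y > 0 := by
      have : y < 1 / 4 := lt_trans hy'.2 hb; linarith
    have hs : Real.sqrt (1 - 4 * y) > 0 := Real.sqrt_pos.mpr hypos
    have hs2 : Real.sqrt (1 - 4 * y) ^ 2 = 1 - 4 * y := Real.sq_sqrt hypos.le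
    have hadd := (hasderiv_S hb0 hb hy').add ((log_deriv hypos).const_mul 2)
    convert hadd using 1
    · rfl
    · rfl
    · rfl
    rcases eq_or_lt_of_le hy.1 with h0 | h0
    · rw [← h0]
      rw [D_val_zero]
      have : Real.sqrt (1 - 4 * 0) = 1 := by norm_num
      rw [this]
      norm_num
    · rw [D_val_pos h0 (by linarith [hy.2] : y < 1/4)]
      set s := Real.sqrt (1 - 4 * y) with hsdef
      have h1s : 0 < 1 + s := by linarith
      field_simp
      linear_combination hs2
  have hcont : ContinuousOn G (Set.Icc 0 c) :=
    fun y hy => ((hG y hy).continuousAt).continuousWithinAt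
  have hconst := constant_of_has_deriv_right_zero hcont
    (fun y hy => ((hG y (Set.mem_Icc.mpr ⟨hy.1, hy.2.le⟩)).hasDerivWithinAt)) c
    (Set.mem_Icc.mpr ⟨hc0, le_refl c⟩)
  have hzero : (∑' k : ℕ, aa (k + 1) * (0:ℝ) ^ (k + 1) / ((k : ℝ) + 1))
      + 2 * Real.log ((1 + Real.sqrt (1 - 4 * 0)) / 2) = 0 := by
    have h1 : (∑' k : ℕ, aa (k + 1) * (0:ℝ) ^ (k + 1) / ((k : ℝ) + 1)) = 0 := by
      rw [tsum_eq_single 0 (fun k hk => by simp [zero_pow (Nat.succ_ne_zero k)])]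
      simp
    rw [h1]
    norm_num
  have hGc : (∑' k : ℕ, aa (k + 1) * c ^ (k + 1) / ((k : ℝ) + 1))
      + 2 * Real.log ((1 + Real.sqrt (1 - 4 * c)) / 2)
      = (∑' k : ℕ, aa (k + 1) * (0:ℝ) ^ (k + 1) / ((k : ℝ) + 1))
      + 2 * Real.log ((1 + Real.sqrt (1 - 4 * 0)) / 2) := hconst
  rw [hzero] at hGc
  linarith
theorem stmt3 (t : ℝ) (ht : t ∈ Set.Ioo (0 : ℝ) (1 / 4)) (xp xm : ℝ)
    (hroots : xp ^ 2 + (2 - t⁻¹) * xp + 1 = 0 ∧ xm ^ 2 + (2 - t⁻¹) * xm + 1 = 0)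
    (horder : xp > xm ∧ xm > 0)
    (hxp : xp = ((t⁻¹ - 2) + Real.sqrt (t⁻¹ * (t⁻¹ - 4))) / 2)
    (hxm : xm = ((t⁻¹ - 2) - Real.sqrt (t⁻¹ * (t⁻¹ - 4))) / 2) :
    (Summable fun k : ℕ =>
      (Nat.choose (2 * (k + 1)) (k + 1) : ℝ) * t ^ (k + 1) / (k + 1)) ∧
    Real.log xp - Real.log xm =
      -2 * Real.log t -
        2 * ∑' k : ℕ, (Nat.choose (2 * (k + 1)) (k + 1) : ℝ) * t ^ (k + 1) / (k + 1) := by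
  obtain ⟨ht0, ht4⟩ := ht
  have hfun : (fun k : ℕ => (Nat.choose (2 * (k + 1)) (k + 1) : ℝ) * t ^ (k + 1) / (k + 1))
      = fun k : ℕ => aa (k + 1) * t ^ (k + 1) / ((k : ℝ) + 1) := by
    funext k
    simp [aa]
  have hsummable : Summable (fun k : ℕ => aa (k + 1) * t ^ (k + 1) / ((k : ℝ) + 1)) := by
    refine Summable.of_norm_bounded (g := fun k => (4 * t) * (4 * t) ^ k)
      ((summable_geometric_of_lt_one (by positivity) (by linarith)).mul_left (4 * t))
      (fun k => ?_)
    rw [Real.norm_eq_abs, abs_div, abs_mul, abs_of_nonneg (aa_nonneg _), abs_pow,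
      abs_of_pos ht0, abs_of_pos (Nat.cast_add_one_pos k)]
    have h1 : aa (k + 1) * t ^ (k + 1) / ((k : ℝ) + 1) ≤ aa (k + 1) * t ^ (k + 1) := by
      apply div_le_self (mul_nonneg (aa_nonneg _) (by positivity)) (by simp)
    calc aa (k + 1) * t ^ (k + 1) / ((k : ℝ) + 1) ≤ aa (k + 1) * t ^ (k + 1) := h1
      _ ≤ 4 ^ (k + 1) * t ^ (k + 1) :=
          mul_le_mul_of_nonneg_right (aa_le _) (by positivity)
      _ = (4 * t) * (4 * t) ^ k := by rw [← mul_pow]; ring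
  constructor
  · rw [hfun]; exact hsummable
  -- algebraic part
  set s : ℝ := Real.sqrt (1 - 4 * t) with hsdef
  have hspos : 0 < s := Real.sqrt_pos.mpr (by linarith)
  have hs2 : s ^ 2 = 1 - 4 * t := Real.sq_sqrt (by linarith)
  have hs1 : s < 1 := by
    have h := Real.sqrt_lt_sqrt (by linarith : (0:ℝ) ≤ 1 - 4 * t)
      (by linarith : 1 - 4 * t < 1)
    rwa [Real.sqrt_one] at h
  have hsq : Real.sqrt (t⁻¹ * (t⁻¹ - 4)) = s / t := by
    have h1 : t⁻¹ * (t⁻¹ - 4) = (s / t) ^ 2 := by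
      rw [div_pow, hs2]
      field_simp
    rw [h1, Real.sqrt_sq (by positivity)]
  set p : ℝ := (1 + s) / 2 with hpdef
  set m : ℝ := (1 - s) / 2 with hmdef
  have hp : 0 < p := by rw [hpdef]; linarith
  have hm : 0 < m := by rw [hmdef]; linarith
  have hpm : p * m = t := by
    rw [hpdef, hmdef]
    linear_combination (-1/4) * hs2
  have hxp' : xp = p ^ 2 / t := by
    rw [hxp, hsq, hpdef]
    field_simp
    linear_combination (-1 : ℝ) * hs2
  have hxm' : xm = m ^ 2 / t := by
    rw [hxm, hsq, hmdef]
    field_simp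
    linear_combination (-1 : ℝ) * hs2
  have hlogxp : Real.log xp = 2 * Real.log p - Real.log t := by
    rw [hxp', Real.log_div (by positivity) (ne_of_gt ht0), Real.log_pow]
    norm_num
  have hlogxm : Real.log xm = 2 * Real.log m - Real.log t := by
    rw [hxm', Real.log_div (by positivity) (ne_of_gt ht0), Real.log_pow]
    norm_num
  have hlogt : Real.log t = Real.log p + Real.log m := by
    rw [← hpm, Real.log_mul (ne_of_gt hp) (ne_of_gt hm)]
  have hts : ∑' k : ℕ, (Nat.choose (2 * (k + 1)) (k + 1) : ℝ) * t ^ (k + 1) / (k + 1)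
      = -2 * Real.log p := by
    rw [hfun, P2 ht0.le ht4, hpdef, hsdef]
  rw [hlogxp, hlogxm, hts]
  linarith [hlogt]
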